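/- Assume 0 ≤ μ ≤ k−1. Then K_1^L(λ)·D_1^L(λ)^T = 0 and K_2^L(λ)·D_2^L(λ)^T = 0 identically in λ; moreover, for every λ_0 ∈ ℂ, the evaluated matrices K_1^L(λ_0) and K_2^L(λ_0) have full row rank and D_1^L(λ_0)^T and D_2^L(λ_0)^T have full column rank (whenever the corresponding matrix is nonempty, i.e. μ ≤ k−2 for K_1^L and μ ≥ 1 for K_2^L). -/

import Mathlib

open Polynomial Matrix

noncomputable section

section AuxLemmas

lemma rank_eq_card_cols_of_inj' {p q : Type*} [Fintype p] [Fintype q] [DecidableEq q]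
    (A : Matrix p q ℂ) (h : Function.Injective A.mulVecLin) :
    A.rank = Fintype.card q := by
  rw [Matrix.rank, LinearMap.finrank_range_of_inj h, Module.finrank_pi]

lemma rank_eq_card_rows_of_inj' {p q : Type*} [Fintype p] [Fintype q] [DecidableEq p]
    (A : Matrix p q ℂ) (h : Function.Injective Aᵀ.mulVecLin) :
    A.rank = Fintype.card p := by
  rw [← Matrix.rank_transpose]
  exact rank_eq_card_cols_of_inj' _ h

lemma colblock_rank' (r n : ℕ) (d : ℕ → ℂ) (i0 : ℕ) (hi0 : i0 < r) (hd : d i0 ≠ 0) :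
    (Matrix.of fun (p : Fin r × Fin n) (t : Fin n) =>
      d p.1 * (if p.2 = t then (1:ℂ) else 0)).rank = n := by
  have := rank_eq_card_cols_of_inj'
    (Matrix.of fun (p : Fin r × Fin n) (t : Fin n) => d p.1 * (if p.2 = t then (1:ℂ) else 0)) ?_
  · simpa using this
  · rw [injective_iff_map_eq_zero]
    intro g hg
    funext s
    have h1 := congrFun hg (⟨i0, hi0⟩, s)
    simp only [Matrix.mulVecLin_apply, Matrix.mulVec, Matrix.of_apply, dotProduct,
      Pi.zero_apply] at h1
    have h2 : (∑ t : Fin n, d i0 * (if s = t then (1:ℂ) else 0) * g t) = d i0 * g s := by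
      rw [Finset.sum_eq_single s]
      · simp
      · intro b _ hb; simp [Ne.symm hb]
      · simp
    rw [h2] at h1
    exact (mul_eq_zero.mp h1).resolve_left hd

lemma bidiag_rank' (r r' n : ℕ) (hr' : r' = r + 1) (a c : ℕ → ℂ) (j : ℕ) (hj : j ≤ r)
    (ha : ∀ i, i < j → a i ≠ 0) (hc : ∀ i, j ≤ i → i < r → c i ≠ 0) :
    (Matrix.of fun (p : Fin r × Fin n) (q : Fin r' × Fin n) =>
      (if (q.1:ℕ) = (p.1:ℕ) then a p.1 else if (q.1:ℕ) = (p.1:ℕ)+1 then c p.1 else 0) *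
      (if p.2 = q.2 then (1:ℂ) else 0)).rank = r * n := by
  subst hr'
  set X : Fin r → Fin (r+1) → ℂ := fun p q =>
    (if (q:ℕ) = (p:ℕ) then a p else if (q:ℕ) = (p:ℕ)+1 then c p else 0) with hX
  have key := rank_eq_card_rows_of_inj'
    (Matrix.of fun (p : Fin r × Fin n) (q : Fin (r+1) × Fin n) =>
      X p.1 q.1 * (if p.2 = q.2 then (1:ℂ) else 0)) ?_
  · simpa using key
  rw [injective_iff_map_eq_zero]
  intro g hg
  have E : ∀ (q : Fin (r+1)) (t : Fin n),
      ∑ p : Fin r, X p q * g (p, t) = 0 := by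
    intro q t
    have h1 := congrFun hg (q, t)
    simp only [Matrix.mulVecLin_apply, Matrix.mulVec, dotProduct, Matrix.transpose_apply,
      Matrix.of_apply, Pi.zero_apply, Fintype.sum_prod_type] at h1
    calc ∑ p : Fin r, X p q * g (p, t)
        = ∑ p : Fin r, ∑ s : Fin n, X p q * (if s = t then (1:ℂ) else 0) * g (p, s) := by
          refine Finset.sum_congr rfl fun p _ => ?_
          rw [Finset.sum_eq_single t]
          · simp
          · intro b _ hb; simp [hb]
          · simp
      _ = 0 := h1
  clear hg
  funext ⟨p, t⟩
  have claim1 : ∀ (p : ℕ) (hp : p < j) (t : Fin n), g (⟨p, lt_of_lt_of_le hp hj⟩, t) = 0 := by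
    intro p
    induction p using Nat.strong_induction_on with
    | _ p ih =>
      intro hp t
      have hpr : p < r := lt_of_lt_of_le hp hj
      have e := E ⟨p, hpr.trans (Nat.lt_succ_self r)⟩ t
      rcases Nat.eq_zero_or_pos p with h0 | h0
      · subst h0
        rw [Finset.sum_eq_single ⟨0, hpr⟩] at e
        · have t1 : X ⟨0, hpr⟩ ⟨0, hpr.trans (Nat.lt_succ_self r)⟩ = a 0 := by
            simp [hX]
          rw [t1] at e
          exact (mul_eq_zero.mp e).resolve_left (ha 0 hp)
        · intro b _ hb
          have hb' : (0:ℕ) ≠ (b:ℕ) := by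
            intro h; exact hb (by ext; exact h.symm)
          have hb'' : (0:ℕ) ≠ (b:ℕ)+1 := by omega
          simp [hX, hb', hb'']
        · simp
      · have hpm : p - 1 < r := by omega
        rw [Finset.sum_eq_add_of_mem ⟨p, hpr⟩ ⟨p-1, hpm⟩ (Finset.mem_univ _)
            (Finset.mem_univ _) (by intro h; have := congrArg Fin.val h; simp at this; omega)
            ?_] at e
        · have t1 : X ⟨p, hpr⟩ ⟨p, hpr.trans (Nat.lt_succ_self r)⟩ = a p := by simp [hX]
          have t2 : X ⟨p-1, hpm⟩ ⟨p, hpr.trans (Nat.lt_succ_self r)⟩ = c (p-1) := by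
            have h1 : p ≠ p - 1 := by omega
            have h2 : p = (p-1)+1 := by omega
            simp only [hX, Fin.val_mk]
            rw [if_neg h1, if_pos h2]
          rw [t1, t2] at e
          have hg1 : g (⟨p-1, hpm⟩, t) = 0 := by
            have := ih (p-1) (by omega) (by omega) t
            convert this using 3
          rw [hg1, mul_zero, add_zero] at e
          exact (mul_eq_zero.mp e).resolve_left (ha p hp)
        · intro b _ hb
          have hb1 : (p:ℕ) ≠ (b:ℕ) := by
            intro h; exact hb.1 (by ext; exact h.symm)
          have hb2 : (p:ℕ) ≠ (b:ℕ)+1 := by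
            intro h; exact hb.2 (by ext; simp; omega)
          simp [hX, hb1, hb2]
  have claim2 : ∀ (d : ℕ) (p : ℕ) (hp : p < r), j ≤ p → r - 1 - p = d →
      ∀ t : Fin n, g (⟨p, hp⟩, t) = 0 := by
    intro d
    induction d with
    | zero =>
      intro p hp hjp hd t
      have e := E ⟨p+1, by omega⟩ t
      rw [Finset.sum_eq_single ⟨p, hp⟩] at e
      · have t2 : X ⟨p, hp⟩ ⟨p+1, by omega⟩ = c p := by
          have h1 : p + 1 ≠ p := by omega
          simp only [hX, Fin.val_mk]
          rw [if_neg h1]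
          simp
        rw [t2] at e
        exact (mul_eq_zero.mp e).resolve_left (hc p hjp hp)
      · intro b _ hb
        have hbr : (b:ℕ) < r := b.2
        have hb1 : (p+1:ℕ) ≠ (b:ℕ) := by omega
        have hb2 : (p+1:ℕ) ≠ (b:ℕ)+1 := by
          intro h; exact hb (by ext; simp; omega)
        simp [hX, hb1, hb2, show p ≠ (b:ℕ) by omega]
      · simp
    | succ d ih =>
      intro p hp hjp hd t
      have hp1 : p + 1 < r := by omega
      have e := E ⟨p+1, by omega⟩ t
      rw [Finset.sum_eq_add_of_mem ⟨p+1, hp1⟩ ⟨p, hp⟩ (Finset.mem_univ _)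
          (Finset.mem_univ _) (by intro h; have := congrArg Fin.val h; simp at this)
          ?_] at e
      · have t1 : X ⟨p+1, hp1⟩ ⟨p+1, by omega⟩ = a (p+1) := by simp [hX]
        have t2 : X ⟨p, hp⟩ ⟨p+1, by omega⟩ = c p := by
          have h1 : p + 1 ≠ p := by omega
          simp only [hX, Fin.val_mk]
          rw [if_neg h1]
          simp
        rw [t1, t2] at e
        have hg1 : g (⟨p+1, hp1⟩, t) = 0 := ih (p+1) hp1 (by omega) (by omega) t
        rw [hg1, mul_zero, zero_add] at e
        exact (mul_eq_zero.mp e).resolve_left (hc p hjp hp)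
      · intro b _ hb
        have hb1 : (p+1:ℕ) ≠ (b:ℕ) := by
          intro h; exact hb.1 (by ext; simp; omega)
        have hb2 : (p+1:ℕ) ≠ (b:ℕ)+1 := by
          intro h; exact hb.2 (by ext; simp; omega)
        simp [hX, hb1, hb2, show p ≠ (b:ℕ) by omega]
  rcases lt_or_ge (p:ℕ) j with h | h
  · have := claim1 p h t
    convert this using 3
    rfl
  · exact claim2 (r - 1 - p) p p.2 h rfl t

lemma bidiag_mul_colblock' (r r' n : ℕ) (hr' : r' = r + 1) (A B D : ℕ → Polynomial ℂ)
    (hAB : ∀ i, i < r → A i * D i + B i * D (i+1) = 0) :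
    (Matrix.of fun (p : Fin r × Fin n) (q : Fin r' × Fin n) =>
      (if (q.1:ℕ) = (p.1:ℕ) then A p.1 else if (q.1:ℕ) = (p.1:ℕ)+1 then B p.1 else 0) *
      (if p.2 = q.2 then (1:Polynomial ℂ) else 0)) *
    (Matrix.of fun (q : Fin r' × Fin n) (t : Fin n) =>
      D q.1 * (if q.2 = t then (1:Polynomial ℂ) else 0)) = 0 := by
  subst hr'
  refine Matrix.ext fun ps t => ?_
  obtain ⟨p, s⟩ := ps
  rw [Matrix.mul_apply]
  simp only [Matrix.of_apply, Matrix.zero_apply]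
  rw [Fintype.sum_prod_type]
  have hps : (p:ℕ) < r := p.2
  show (∑ q : Fin (r+1), ∑ u : Fin n,
        ((if (q:ℕ) = (p:ℕ) then A p else if (q:ℕ) = (p:ℕ)+1 then B p else 0) *
          (if s = u then (1:Polynomial ℂ) else 0)) * (D q * (if u = t then 1 else 0))) = 0
  have inner : ∀ q : Fin (r+1),
      (∑ u : Fin n,
        ((if (q:ℕ) = (p:ℕ) then A p else if (q:ℕ) = (p:ℕ)+1 then B p else 0) *
          (if s = u then (1:Polynomial ℂ) else 0)) * (D q * (if u = t then 1 else 0)))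
      = ((if (q:ℕ) = (p:ℕ) then A p else if (q:ℕ) = (p:ℕ)+1 then B p else 0) * D q) *
          (if s = t then (1:Polynomial ℂ) else 0) := by
    intro q
    rw [Finset.sum_eq_single s]
    · by_cases hst : s = t <;> simp [hst] <;> ring
    · intro b _ hb
      simp [Ne.symm hb]
    · simp
  calc (∑ q : Fin (r+1), ∑ u : Fin n,
        ((if (q:ℕ) = (p:ℕ) then A p else if (q:ℕ) = (p:ℕ)+1 then B p else 0) *
          (if s = u then (1:Polynomial ℂ) else 0)) * (D q * (if u = t then 1 else 0)))
      = ∑ q : Fin (r+1),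
        ((if (q:ℕ) = (p:ℕ) then A p else if (q:ℕ) = (p:ℕ)+1 then B p else 0) * D q) *
          (if s = t then (1:Polynomial ℂ) else 0) := Finset.sum_congr rfl fun q _ => inner q
    _ = (∑ q : Fin (r+1),
        (if (q:ℕ) = (p:ℕ) then A p else if (q:ℕ) = (p:ℕ)+1 then B p else 0) * D q) *
          (if s = t then (1:Polynomial ℂ) else 0) := by rw [Finset.sum_mul]
    _ = 0 := by
        rw [Finset.sum_eq_add_of_mem ⟨p, by omega⟩ ⟨(p:ℕ)+1, by omega⟩ (Finset.mem_univ _)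
          (Finset.mem_univ _) (by intro h; have := congrArg Fin.val h; simp at this)
          ?_]
        · have t1 : ((⟨(p:ℕ), by omega⟩ : Fin (r+1)) : ℕ) = (p:ℕ) := rfl
          have t2 : ((⟨(p:ℕ)+1, by omega⟩ : Fin (r+1)) : ℕ) = (p:ℕ)+1 := rfl
          rw [if_pos t1, if_neg (by omega : ¬((⟨(p:ℕ)+1, by omega⟩ : Fin (r+1)) : ℕ) = (p:ℕ)),
            if_pos t2]
          rw [hAB (p:ℕ) hps]
          ring
        · intro b _ hb
          have hb1 : ¬((b:ℕ) = (p:ℕ)) := by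
            intro h; exact hb.1 (by ext; simpa using h)
          have hb2 : ¬((b:ℕ) = (p:ℕ)+1) := by
            intro h; exact hb.2 (by ext; simpa using h)
          rw [if_neg hb1, if_neg hb2]
          simp

lemma prod_erase_pair' {S : Finset ℕ} {e1 e2 : ℕ} (h1 : e1 ∈ S) (hne : e1 ≠ e2)
    (f : ℕ → Polynomial ℂ) :
    f e1 * ∏ l ∈ (S.erase e1).erase e2, f l = ∏ l ∈ S.erase e2, f l := by
  have hcomm : (S.erase e1).erase e2 = (S.erase e2).erase e1 := by
    ext a; simp only [Finset.mem_erase]; tauto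
  rw [hcomm, Finset.mul_prod_erase _ _ (Finset.mem_erase.mpr ⟨hne, h1⟩)]

end AuxLemmas


/-- `gam x j` is the linear polynomial `γ_j(λ) = λ - x_j` (1-based node index). -/
def gam (x : ℕ → ℂ) (j : ℕ) : Polynomial ℂ := X - C (x j)

/-- The barycentric weight `w_i = 1 / ∏_{j ≠ i, 1 ≤ j ≤ k+1} (x_i - x_j)`. -/
def wbar (k : ℕ) (x : ℕ → ℂ) (i : ℕ) : ℂ :=
  (∏ j ∈ (Finset.Icc 1 (k + 1)).erase i, (x i - x j))⁻¹

/-- The matrix pencil `K_1^L(λ)`: `(k-μ-1) × (k-μ)` block matrix with `n × n` blocks,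
`(i,i)` block `γ_{k+2-i}(λ) I_n`, `(i,i+1)` block `-γ_{k-i}(λ) I_n` (1-based). -/
def K1L (k μ n : ℕ) (x : ℕ → ℂ) :
    Matrix (Fin (k - μ - 1) × Fin n) (Fin (k - μ) × Fin n) (Polynomial ℂ) :=
  Matrix.of fun p q =>
    (if (q.1 : ℕ) = (p.1 : ℕ) then gam x (k + 1 - (p.1 : ℕ))
      else if (q.1 : ℕ) = (p.1 : ℕ) + 1 then -gam x (k - 1 - (p.1 : ℕ)) else 0) *
    (if p.2 = q.2 then 1 else 0)

/-- The matrix pencil `K_2^L(λ)`: `μ × (μ+1)` block matrix with `m × m` blocks,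
`(i,i)` block `γ_{μ+3-i}(λ) I_m`, `(i,i+1)` block `-γ_{μ+1-i}(λ) I_m` (1-based). -/
def K2L (μ m : ℕ) (x : ℕ → ℂ) :
    Matrix (Fin μ × Fin m) (Fin (μ + 1) × Fin m) (Polynomial ℂ) :=
  Matrix.of fun p q =>
    (if (q.1 : ℕ) = (p.1 : ℕ) then gam x (μ + 2 - (p.1 : ℕ))
      else if (q.1 : ℕ) = (p.1 : ℕ) + 1 then -gam x (μ - (p.1 : ℕ)) else 0) *
    (if p.2 = q.2 then 1 else 0)

/-- `D_1^L(λ)^T`: block column with `k-μ` blocks whose `i`-th block (1-based) is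
`(n_{μ+1}^{k+1}(λ)/(γ_{k+2-i}(λ)γ_{k+1-i}(λ))) I_n`, the quotient being the product of
the factors `γ_ℓ`, `μ+1 ≤ ℓ ≤ k+1`, with the two indicated factors deleted. -/
def D1LT (k μ n : ℕ) (x : ℕ → ℂ) :
    Matrix (Fin (k - μ) × Fin n) (Fin n) (Polynomial ℂ) :=
  Matrix.of fun p t =>
    (∏ l ∈ ((Finset.Icc (μ + 1) (k + 1)).erase (k + 1 - (p.1 : ℕ))).erase (k - (p.1 : ℕ)),
        gam x l) *
    (if p.2 = t then 1 else 0)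

/-- `D_2^L(λ)^T`: block column with `μ+1` blocks whose `i`-th block (1-based) is
`(n_1^{μ+2}(λ)/(γ_{μ+3-i}(λ)γ_{μ+2-i}(λ))) I_m`. -/
def D2LT (μ m : ℕ) (x : ℕ → ℂ) :
    Matrix (Fin (μ + 1) × Fin m) (Fin m) (Polynomial ℂ) :=
  Matrix.of fun p t =>
    (∏ l ∈ ((Finset.Icc 1 (μ + 2)).erase (μ + 2 - (p.1 : ℕ))).erase (μ + 1 - (p.1 : ℕ)),
        gam x l) *
    (if p.2 = t then 1 else 0)

/-- The Lagrange interpolation matrix polynomial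
`P(λ) = Σ_{i=1}^{k+1} w_i P_i ∏_{j ≠ i} (λ - x_j)`. -/
def PmatL (k m n : ℕ) (x : ℕ → ℂ) (P : ℕ → Matrix (Fin m) (Fin n) ℂ) :
    Matrix (Fin m) (Fin n) (Polynomial ℂ) :=
  ∑ i ∈ Finset.Icc 1 (k + 1),
    (C (wbar k x i) * ∏ j ∈ (Finset.Icc 1 (k + 1)).erase i, gam x j) • (P i).map C

/-- The body `M_μ^L(λ)`: `(μ+1) × (k-μ)` block matrix with `(1,1)` block
`w_{k+1}γ_k(λ)P_{k+1} + w_kγ_{k+1}(λ)P_k`, `(1,j)` block `w_{k+1-j}γ_{k+2-j}(λ)P_{k+1-j}`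
for `2 ≤ j ≤ k-μ`, `(i,k-μ)` block `w_{μ+2-i}γ_{μ+3-i}(λ)P_{μ+2-i}` for `2 ≤ i ≤ μ+1`,
and zero blocks elsewhere (1-based block indices). -/
def MmuL (k μ m n : ℕ) (x : ℕ → ℂ) (P : ℕ → Matrix (Fin m) (Fin n) ℂ) :
    Matrix (Fin (μ + 1) × Fin m) (Fin (k - μ) × Fin n) (Polynomial ℂ) :=
  Matrix.of fun p q =>
    if (p.1 : ℕ) = 0 ∧ (q.1 : ℕ) = 0 then
      C (wbar k x (k + 1)) * gam x k * C (P (k + 1) p.2 q.2) +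
        C (wbar k x k) * gam x (k + 1) * C (P k p.2 q.2)
    else if (p.1 : ℕ) = 0 then
      C (wbar k x (k - (q.1 : ℕ))) * gam x (k + 1 - (q.1 : ℕ)) * C (P (k - (q.1 : ℕ)) p.2 q.2)
    else if (q.1 : ℕ) = k - μ - 1 then
      C (wbar k x (μ + 1 - (p.1 : ℕ))) * gam x (μ + 2 - (p.1 : ℕ)) *
        C (P (μ + 1 - (p.1 : ℕ)) p.2 q.2)
    else 0

/-- The colleague Lagrange pencil `L_P^μ(λ) = [[M_μ^L(λ), K_2^L(λ)^T], [K_1^L(λ), 0]]`. -/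
def LPmu (k μ m n : ℕ) (x : ℕ → ℂ) (P : ℕ → Matrix (Fin m) (Fin n) ℂ) :
    Matrix ((Fin (μ + 1) × Fin m) ⊕ (Fin (k - μ - 1) × Fin n))
      ((Fin (k - μ) × Fin n) ⊕ (Fin μ × Fin m)) (Polynomial ℂ) :=
  Matrix.fromBlocks (MmuL k μ m n x P) (K2L μ m x).transpose (K1L k μ n x) 0

/-- Duality and minimality for the Lagrange pencils: `K_1^L(λ) D_1^L(λ)^T = 0`,
`K_2^L(λ) D_2^L(λ)^T = 0`, and for every `λ_0 ∈ ℂ` the evaluations of `K_1^L`, `K_2^L`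
have full row rank (when nonempty) and those of `D_1^L(λ)^T`, `D_2^L(λ)^T` have full
column rank. -/
theorem lagrange_dual_minimal_bases
    (k μ m n : ℕ) (hk : 2 ≤ k) (hμ : μ ≤ k - 1) (hm : 0 < m) (hn : 0 < n)
    (x : ℕ → ℂ)
    (hx : ∀ i j : ℕ, 1 ≤ i → i ≤ k + 1 → 1 ≤ j → j ≤ k + 1 → x i = x j → i = j) :
    K1L k μ n x * D1LT k μ n x = 0 ∧
    K2L μ m x * D2LT μ m x = 0 ∧
    (μ ≤ k - 2 → ∀ lam : ℂ, ((K1L k μ n x).map (eval lam)).rank = (k - μ - 1) * n) ∧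
    (1 ≤ μ → ∀ lam : ℂ, ((K2L μ m x).map (eval lam)).rank = μ * m) ∧
    (∀ lam : ℂ, ((D1LT k μ n x).map (eval lam)).rank = n) ∧
    (∀ lam : ℂ, ((D2LT μ m x).map (eval lam)).rank = m) := by
  refine ⟨?_, ?_, ?_, ?_, ?_, ?_⟩
  · -- K1L * D1LT = 0
    have hAB : ∀ i, i < k - μ - 1 →
        gam x (k+1-i) *
          (∏ l ∈ ((Finset.Icc (μ+1) (k+1)).erase (k+1-i)).erase (k-i), gam x l) +
        (-gam x (k-1-i)) *
          (∏ l ∈ ((Finset.Icc (μ+1) (k+1)).erase (k+1-(i+1))).erase (k-(i+1)), gam x l)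
          = 0 := by
      intro i hi
      have e1 : k+1-(i+1) = k-i := by omega
      have e2 : k-(i+1) = k-1-i := by omega
      rw [e1, e2]
      have m1 : k+1-i ∈ Finset.Icc (μ+1) (k+1) := Finset.mem_Icc.mpr ⟨by omega, by omega⟩
      have m2 : k-1-i ∈ (Finset.Icc (μ+1) (k+1)).erase (k-i) :=
        Finset.mem_erase.mpr ⟨by omega, Finset.mem_Icc.mpr ⟨by omega, by omega⟩⟩
      rw [prod_erase_pair' m1 (by omega) (gam x), neg_mul,
        Finset.mul_prod_erase _ _ m2, add_neg_cancel]
    exact bidiag_mul_colblock' (k-μ-1) (k-μ) n (by omega)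
      (fun i => gam x (k+1-i)) (fun i => -gam x (k-1-i))
      (fun i => ∏ l ∈ ((Finset.Icc (μ+1) (k+1)).erase (k+1-i)).erase (k-i), gam x l) hAB
  · -- K2L * D2LT = 0
    have hAB : ∀ i, i < μ →
        gam x (μ+2-i) *
          (∏ l ∈ ((Finset.Icc 1 (μ+2)).erase (μ+2-i)).erase (μ+1-i), gam x l) +
        (-gam x (μ-i)) *
          (∏ l ∈ ((Finset.Icc 1 (μ+2)).erase (μ+2-(i+1))).erase (μ+1-(i+1)), gam x l)
          = 0 := by
      intro i hi
      have e1 : μ+2-(i+1) = μ+1-i := by omega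
      have e2 : μ+1-(i+1) = μ-i := by omega
      rw [e1, e2]
      have m1 : μ+2-i ∈ Finset.Icc 1 (μ+2) := Finset.mem_Icc.mpr ⟨by omega, by omega⟩
      have m2 : μ-i ∈ (Finset.Icc 1 (μ+2)).erase (μ+1-i) :=
        Finset.mem_erase.mpr ⟨by omega, Finset.mem_Icc.mpr ⟨by omega, by omega⟩⟩
      rw [prod_erase_pair' m1 (by omega) (gam x), neg_mul,
        Finset.mul_prod_erase _ _ m2, add_neg_cancel]
    exact bidiag_mul_colblock' μ (μ+1) m rfl
      (fun i => gam x (μ+2-i)) (fun i => -gam x (μ-i))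
      (fun i => ∏ l ∈ ((Finset.Icc 1 (μ+2)).erase (μ+2-i)).erase (μ+1-i), gam x l) hAB
  · -- K1L full row rank
    intro hμ2 lam
    have hmat : (K1L k μ n x).map (eval lam) =
        Matrix.of (fun (p : Fin (k-μ-1) × Fin n) (q : Fin (k-μ) × Fin n) =>
          (if (q.1:ℕ) = (p.1:ℕ) then lam - x (k+1-(p.1:ℕ))
            else if (q.1:ℕ) = (p.1:ℕ)+1 then -(lam - x (k-1-(p.1:ℕ))) else 0) *
          (if p.2 = q.2 then (1:ℂ) else 0)) := by
      refine Matrix.ext fun p q => ?_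
      simp [K1L, gam, apply_ite (Polynomial.eval lam)]
    rw [hmat]
    by_cases hex : ∃ l, μ+3 ≤ l ∧ l ≤ k+1 ∧ lam = x l
    · obtain ⟨l0, hl1, hl2, hl3⟩ := hex
      refine bidiag_rank' (k-μ-1) (k-μ) n (by omega)
        (fun i => lam - x (k+1-i)) (fun i => -(lam - x (k-1-i))) (k+1-l0) (by omega) ?_ ?_
      · intro i hi h0
        have := hx l0 (k+1-i) (by omega) (by omega) (by omega) (by omega)
          (hl3 ▸ sub_eq_zero.mp h0)
        omega
      · intro i hji hir h0
        rw [neg_eq_zero] at h0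
        have := hx l0 (k-1-i) (by omega) (by omega) (by omega) (by omega)
          (hl3 ▸ sub_eq_zero.mp h0)
        omega
    · refine bidiag_rank' (k-μ-1) (k-μ) n (by omega)
        (fun i => lam - x (k+1-i)) (fun i => -(lam - x (k-1-i))) (k-μ-1) (le_refl _) ?_ ?_
      · intro i hi h0
        exact hex ⟨k+1-i, by omega, by omega, sub_eq_zero.mp h0⟩
      · intro i h1 h2 _
        omega
  · -- K2L full row rank
    intro hμ1 lam
    have hmat : (K2L μ m x).map (eval lam) =
        Matrix.of (fun (p : Fin μ × Fin m) (q : Fin (μ+1) × Fin m) =>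
          (if (q.1:ℕ) = (p.1:ℕ) then lam - x (μ+2-(p.1:ℕ))
            else if (q.1:ℕ) = (p.1:ℕ)+1 then -(lam - x (μ-(p.1:ℕ))) else 0) *
          (if p.2 = q.2 then (1:ℂ) else 0)) := by
      refine Matrix.ext fun p q => ?_
      simp [K2L, gam, apply_ite (Polynomial.eval lam)]
    rw [hmat]
    by_cases hex : ∃ l, 3 ≤ l ∧ l ≤ μ+2 ∧ lam = x l
    · obtain ⟨l0, hl1, hl2, hl3⟩ := hex
      refine bidiag_rank' μ (μ+1) m rfl
        (fun i => lam - x (μ+2-i)) (fun i => -(lam - x (μ-i))) (μ+2-l0) (by omega) ?_ ?_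
      · intro i hi h0
        have := hx l0 (μ+2-i) (by omega) (by omega) (by omega) (by omega)
          (hl3 ▸ sub_eq_zero.mp h0)
        omega
      · intro i hji hir h0
        rw [neg_eq_zero] at h0
        have := hx l0 (μ-i) (by omega) (by omega) (by omega) (by omega)
          (hl3 ▸ sub_eq_zero.mp h0)
        omega
    · refine bidiag_rank' μ (μ+1) m rfl
        (fun i => lam - x (μ+2-i)) (fun i => -(lam - x (μ-i))) μ (le_refl _) ?_ ?_
      · intro i hi h0
        exact hex ⟨μ+2-i, by omega, by omega, sub_eq_zero.mp h0⟩
      · intro i h1 h2 _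
        omega
  · -- D1LT full column rank
    intro lam
    have hmat : (D1LT k μ n x).map (eval lam) =
        Matrix.of (fun (p : Fin (k-μ) × Fin n) (t : Fin n) =>
          (∏ l ∈ ((Finset.Icc (μ+1) (k+1)).erase (k+1-(p.1:ℕ))).erase (k-(p.1:ℕ)),
            (lam - x l)) * (if p.2 = t then (1:ℂ) else 0)) := by
      refine Matrix.ext fun p t => ?_
      simp [D1LT, gam, apply_ite (Polynomial.eval lam), Polynomial.eval_prod]
    rw [hmat]
    have key : ∀ i0 : ℕ, i0 < k - μ →
        (∀ l, l ∈ ((Finset.Icc (μ+1) (k+1)).erase (k+1-i0)).erase (k-i0) → lam ≠ x l) →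
        (Matrix.of (fun (p : Fin (k-μ) × Fin n) (t : Fin n) =>
          (∏ l ∈ ((Finset.Icc (μ+1) (k+1)).erase (k+1-(p.1:ℕ))).erase (k-(p.1:ℕ)),
            (lam - x l)) * (if p.2 = t then (1:ℂ) else 0))).rank = n := by
      intro i0 hi0 hne
      refine colblock_rank' (k-μ) n
        (fun i => ∏ l ∈ ((Finset.Icc (μ+1) (k+1)).erase (k+1-i)).erase (k-i), (lam - x l))
        i0 hi0 ?_
      rw [Finset.prod_ne_zero_iff]
      exact fun l hl => sub_ne_zero.mpr (hne l hl)
    by_cases hex : ∃ l, μ+1 ≤ l ∧ l ≤ k+1 ∧ lam = x l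
    · obtain ⟨l0, hl1, hl2, hl3⟩ := hex
      by_cases hl0 : l0 = μ+1
      · refine key (k-μ-1) (by omega) ?_
        intro l hl h0
        rw [Finset.mem_erase, Finset.mem_erase, Finset.mem_Icc] at hl
        have := hx l0 l (by omega) (by omega) (by omega) (by omega) (hl3 ▸ h0)
        omega
      · refine key (k+1-l0) (by omega) ?_
        intro l hl h0
        rw [Finset.mem_erase, Finset.mem_erase, Finset.mem_Icc] at hl
        have := hx l0 l (by omega) (by omega) (by omega) (by omega) (hl3 ▸ h0)
        omega
    · refine key 0 (by omega) ?_
      intro l hl h0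
      rw [Finset.mem_erase, Finset.mem_erase, Finset.mem_Icc] at hl
      exact hex ⟨l, by omega, by omega, h0⟩
  · -- D2LT full column rank
    intro lam
    have hmat : (D2LT μ m x).map (eval lam) =
        Matrix.of (fun (p : Fin (μ+1) × Fin m) (t : Fin m) =>
          (∏ l ∈ ((Finset.Icc 1 (μ+2)).erase (μ+2-(p.1:ℕ))).erase (μ+1-(p.1:ℕ)),
            (lam - x l)) * (if p.2 = t then (1:ℂ) else 0)) := by
      refine Matrix.ext fun p t => ?_
      simp [D2LT, gam, apply_ite (Polynomial.eval lam), Polynomial.eval_prod]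
    rw [hmat]
    have key : ∀ i0 : ℕ, i0 < μ + 1 →
        (∀ l, l ∈ ((Finset.Icc 1 (μ+2)).erase (μ+2-i0)).erase (μ+1-i0) → lam ≠ x l) →
        (Matrix.of (fun (p : Fin (μ+1) × Fin m) (t : Fin m) =>
          (∏ l ∈ ((Finset.Icc 1 (μ+2)).erase (μ+2-(p.1:ℕ))).erase (μ+1-(p.1:ℕ)),
            (lam - x l)) * (if p.2 = t then (1:ℂ) else 0))).rank = m := by
      intro i0 hi0 hne
      refine colblock_rank' (μ+1) m
        (fun i => ∏ l ∈ ((Finset.Icc 1 (μ+2)).erase (μ+2-i)).erase (μ+1-i), (lam - x l))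
        i0 hi0 ?_
      rw [Finset.prod_ne_zero_iff]
      exact fun l hl => sub_ne_zero.mpr (hne l hl)
    by_cases hex : ∃ l, 1 ≤ l ∧ l ≤ μ+2 ∧ lam = x l
    · obtain ⟨l0, hl1, hl2, hl3⟩ := hex
      by_cases hl0 : l0 = 1
      · refine key μ (by omega) ?_
        intro l hl h0
        rw [Finset.mem_erase, Finset.mem_erase, Finset.mem_Icc] at hl
        have := hx l0 l (by omega) (by omega) (by omega) (by omega) (hl3 ▸ h0)
        omega
      · refine key (μ+2-l0) (by omega) ?_
        intro l hl h0
        rw [Finset.mem_erase, Finset.mem_erase, Finset.mem_Icc] at hl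
        have := hx l0 l (by omega) (by omega) (by omega) (by omega) (hl3 ▸ h0)
        omega
    · refine key 0 (by omega) ?_
      intro l hl h0
      rw [Finset.mem_erase, Finset.mem_erase, Finset.mem_Icc] at hl
      exact hex ⟨l, by omega, by omega, h0⟩
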